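/- Let c be a real number with 0 < |c| < √2. Then for every pair ε = (ε_η, ε_v) of real-valued Schwartz functions on ℝ one has H_c(ε) = L_c(ε_η) + ∫_ℝ (1−η_c)·(ε_v + c·ε_η/(2·(1−η_c)²))² dx, where H_c(ε) := (1/4)·∫_ℝ (ε_η′)²/(1−η_c) + (1/4)·∫_ℝ (2 − η_c″/(1−η_c)² − (η_c′)²/(1−η_c)³)·ε_η² + ∫_ℝ ((1−η_c)·ε_v² + (c − 2·v_c)·ε_η·ε_v), and L_c(ε_η) := (1/4)·∫_ℝ (ε_η′)²/(1−η_c) + (1/4)·∫_ℝ ((2 − c² − 6·η_c + 3·η_c²)/(1−η_c)²)·ε_η². -/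

import Mathlib

open MeasureTheory

set_option maxHeartbeats 1000000 in
/-- Decomposition of the quadratic form `H_c` as
`H_c(ε) = L_c(ε_η) + ∫ (1-η_c)(ε_v + c ε_η/(2(1-η_c)²))²`. -/
theorem Hc_eq_Lc_plus_square (c : ℝ) (hc0 : c ≠ 0) (hc : |c| < Real.sqrt 2)
    (η v : ℝ → ℝ)
    (hη : ∀ x : ℝ, η x =
      (2 - c ^ 2) / (2 * (Real.cosh (Real.sqrt (2 - c ^ 2) * x / 2)) ^ 2))
    (hv : ∀ x : ℝ, v x = -c * η x / (2 * (1 - η x))) :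
    ∀ εη εv : SchwartzMap ℝ ℝ,
      (1 / 4) * (∫ x : ℝ, (deriv (⇑εη) x) ^ 2 / (1 - η x))
        + (1 / 4) * (∫ x : ℝ,
            (2 - deriv (deriv η) x / (1 - η x) ^ 2 - (deriv η x) ^ 2 / (1 - η x) ^ 3)
              * (εη x) ^ 2)
        + (∫ x : ℝ, ((1 - η x) * (εv x) ^ 2 + (c - 2 * v x) * εη x * εv x))
      = (1 / 4) * (∫ x : ℝ, (deriv (⇑εη) x) ^ 2 / (1 - η x))
          + (1 / 4) * (∫ x : ℝ,
              ((2 - c ^ 2 - 6 * η x + 3 * (η x) ^ 2) / (1 - η x) ^ 2) * (εη x) ^ 2)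
          + (∫ x : ℝ, (1 - η x) * (εv x + c * εη x / (2 * (1 - η x) ^ 2)) ^ 2) := by
  intro εη εv
  have hc2pos : 0 < c ^ 2 := by positivity
  have h2c : 0 < 2 - c ^ 2 := by
    have h1 : |c| ^ 2 < Real.sqrt 2 ^ 2 :=
      pow_lt_pow_left₀ hc (abs_nonneg c) two_ne_zero
    rw [sq_abs, Real.sq_sqrt (by norm_num : (0:ℝ) ≤ 2)] at h1
    linarith
  set k := Real.sqrt (2 - c ^ 2) with hkdef
  have hk : k ^ 2 = 2 - c ^ 2 := Real.sq_sqrt h2c.le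
  have hkpos : 0 < k := Real.sqrt_pos.2 h2c
  have hηx : ∀ x : ℝ, η x = k ^ 2 / 2 / Real.cosh (k * x / 2) ^ 2 := by
    intro x; rw [hη x, ← hk]; ring
  have hchpos : ∀ y : ℝ, 0 < Real.cosh y := Real.cosh_pos
  have hη0 : ∀ x, 0 ≤ η x := by intro x; rw [hηx x]; positivity
  have hη_le : ∀ x, η x ≤ k ^ 2 / 2 := by
    intro x
    rw [hηx x]
    have h1 := Real.one_le_cosh (k * x / 2)
    exact div_le_self (by positivity) (by nlinarith)
  have hm : ∀ x, c ^ 2 / 2 ≤ 1 - η x := by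
    intro x; have := hη_le x; rw [hk] at this; linarith
  have hm1 : ∀ x, 1 - η x ≤ 1 := by intro x; have := hη0 x; linarith
  have hmpos : ∀ x, 0 < 1 - η x := fun x => lt_of_lt_of_le (by positivity) (hm x)
  have hmne : ∀ x, (1:ℝ) - η x ≠ 0 := fun x => (hmpos x).ne'
  -- continuity of η
  have hηfun : η = fun x => k ^ 2 / 2 / Real.cosh (k * x / 2) ^ 2 := funext hηx
  have hcont : Continuous η := by
    rw [hηfun]
    exact continuous_const.div
      (by fun_prop) (fun x => by positivity)
  -- derivative machinery
  have hlin : ∀ x : ℝ, HasDerivAt (fun y : ℝ => k * y / 2) (k / 2) x := by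
    intro x
    simpa using ((hasDerivAt_id x).const_mul k).div_const 2
  have hdcosh : ∀ x : ℝ, HasDerivAt (fun y : ℝ => Real.cosh (k * y / 2))
      (Real.sinh (k * x / 2) * (k / 2)) x := by
    intro x
    exact (Real.hasDerivAt_cosh (k * x / 2)).comp x (hlin x)
  have hdη : ∀ x : ℝ, HasDerivAt η
      (-(k ^ 2 / 2 * k) * Real.sinh (k * x / 2) / Real.cosh (k * x / 2) ^ 3) x := by
    intro x
    have hcne : Real.cosh (k * x / 2) ≠ 0 := (hchpos _).ne'
    have h2 := (hdcosh x).pow 2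
    have h := (hasDerivAt_const x (k ^ 2 / 2)).div h2 (pow_ne_zero 2 hcne)
    rw [hηfun]
    convert h using 1
    · rfl
    · rfl
    show _ = (0 * Real.cosh (k * x / 2) ^ 2 - k ^ 2 / 2 * ((2:ℕ) * Real.cosh (k * x / 2) ^ (2 - 1) * (Real.sinh (k * x / 2) * (k / 2)))) / (Real.cosh (k * x / 2) ^ 2) ^ 2
    field_simp
    ring
    rfl
  have hderivη : ∀ x, deriv η x
      = -(k ^ 2 / 2 * k) * Real.sinh (k * x / 2) / Real.cosh (k * x / 2) ^ 3 :=
    fun x => (hdη x).deriv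
  have hderivηfun : deriv η
      = fun x => -(k ^ 2 / 2 * k) * Real.sinh (k * x / 2) / Real.cosh (k * x / 2) ^ 3 :=
    funext hderivη
  have hsinhsq : ∀ x : ℝ, Real.sinh (k * x / 2) ^ 2 = Real.cosh (k * x / 2) ^ 2 - 1 :=
    fun x => Real.sinh_sq _
  have hd2η : ∀ x, deriv (deriv η) x = (2 - c ^ 2) * η x - 3 * η x ^ 2 := by
    intro x
    have hcne : Real.cosh (k * x / 2) ≠ 0 := (hchpos _).ne'
    have hds : HasDerivAt (fun y : ℝ => Real.sinh (k * y / 2))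
        (Real.cosh (k * x / 2) * (k / 2)) x :=
      HasDerivAt.comp (h₂ := fun y => Real.sinh y) x (Real.hasDerivAt_sinh (k * x / 2)) (hlin x)
    have h3 := (hdcosh x).pow 3
    have h := (hds.const_mul (-(k ^ 2 / 2 * k))).div h3 (pow_ne_zero 3 hcne)
    have h' : HasDerivAt (fun y => -(k ^ 2 / 2 * k) * Real.sinh (k * y / 2) / Real.cosh (k * y / 2) ^ 3) _ x := h
    rw [hderivηfun, h'.deriv, hηx x, ← hk]
    simp only [Pi.pow_apply]
    field_simp
    linear_combination (3 * Real.cosh (k * x / 2) ^ 2) * hsinhsq x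
  have hdsq : ∀ x, (deriv η x) ^ 2 = (2 - c ^ 2) * η x ^ 2 - 2 * η x ^ 3 := by
    intro x
    have hcne : Real.cosh (k * x / 2) ≠ 0 := (hchpos _).ne'
    rw [hderivη x, hηx x, ← hk]
    rw [div_pow, mul_pow, hsinhsq x]
    field_simp
  -- pointwise identities
  have hpt2 : ∀ x : ℝ,
      (2 - deriv (deriv η) x / (1 - η x) ^ 2 - (deriv η x) ^ 2 / (1 - η x) ^ 3) * (εη x) ^ 2
      = ((2 - c ^ 2 - 6 * η x + 3 * (η x) ^ 2) / (1 - η x) ^ 2) * (εη x) ^ 2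
        + 4 * (c ^ 2 / (4 * (1 - η x) ^ 3) * (εη x) ^ 2) := by
    intro x
    rw [hd2η x, hdsq x]
    have := hmne x
    field_simp
    ring
  have hpt3L : ∀ x : ℝ,
      (1 - η x) * (εv x) ^ 2 + (c - 2 * v x) * εη x * εv x
      = (1 - η x) * (εv x) ^ 2 + (c / (1 - η x)) * (εη x * εv x) := by
    intro x
    have := hmne x
    rw [hv x]
    field_simp
    ring
  have hpt3R : ∀ x : ℝ,
      (1 - η x) * (εv x + c * εη x / (2 * (1 - η x) ^ 2)) ^ 2
      = ((1 - η x) * (εv x) ^ 2 + (c / (1 - η x)) * (εη x * εv x))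
        + c ^ 2 / (4 * (1 - η x) ^ 3) * (εη x) ^ 2 := by
    intro x
    have := hmne x
    field_simp
    ring
  -- boundedness of Schwartz maps
  have hbound : ∀ f : SchwartzMap ℝ ℝ, ∃ C, ∀ x, ‖f x‖ ≤ C := by
    intro f
    obtain ⟨C, -, hC⟩ := f.decay 0 0
    exact ⟨C, fun x => by simpa [norm_iteratedFDeriv_zero] using hC x⟩
  -- integrability blocks
  have hεη2 : Integrable (fun x => (εη x) ^ 2) := by
    have := (εη.integrable (μ := volume)).bdd_mul
      εη.continuous.aestronglyMeasurable (Filter.Eventually.of_forall (hbound εη).choose_spec)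
    simpa [pow_two] using this
  have hεv2 : Integrable (fun x => (εv x) ^ 2) := by
    have := (εv.integrable (μ := volume)).bdd_mul
      εv.continuous.aestronglyMeasurable (Filter.Eventually.of_forall (hbound εv).choose_spec)
    simpa [pow_two] using this
  have hεηv : Integrable (fun x => εη x * εv x) :=
    (εv.integrable (μ := volume)).bdd_mul εη.continuous.aestronglyMeasurable
      (Filter.Eventually.of_forall (hbound εη).choose_spec)
  have hd2 : (0:ℝ) < c ^ 2 / 2 := by positivity
  -- integrability of the coefficient-weighted terms
  have hIB : Integrable (fun x => ((2 - c ^ 2 - 6 * η x + 3 * (η x) ^ 2) / (1 - η x) ^ 2)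
      * (εη x) ^ 2) := by
    apply hεη2.bdd_mul
    · exact (Continuous.div (by fun_prop) (by fun_prop)
        (fun x => pow_ne_zero 2 (hmne x))).aestronglyMeasurable
    · refine Filter.Eventually.of_forall (fun x => (?_ : _ ≤ 13 / (c ^ 2 / 2) ^ 2))
      rw [Real.norm_eq_abs, abs_div, abs_of_nonneg (by positivity : (0:ℝ) ≤ (1 - η x) ^ 2)]
      have h0 := hη0 x
      have h1 : η x ≤ 1 := by have := hm x; nlinarith
      apply div_le_div₀ (by positivity)
      · rw [abs_le]; constructor <;> nlinarith [h2c]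
      · positivity
      · have h3 : (c ^ 2 / 2) ^ 2 ≤ (1 - η x) ^ 2 := pow_le_pow_left₀ hd2.le (hm x) 2
        linarith
  have hIF : Integrable (fun x => c ^ 2 / (4 * (1 - η x) ^ 3) * (εη x) ^ 2) := by
    apply hεη2.bdd_mul
    · exact (Continuous.div (by fun_prop) (by fun_prop)
        (fun x => by have := hmpos x; positivity)).aestronglyMeasurable
    · refine Filter.Eventually.of_forall (fun x => (?_ : _ ≤ c ^ 2 / (4 * (c ^ 2 / 2) ^ 3)))
      rw [Real.norm_eq_abs, abs_of_nonneg (by have := hmpos x; positivity)]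
      apply div_le_div₀ (by positivity) le_rfl (by positivity)
      have h3 : (c ^ 2 / 2) ^ 3 ≤ (1 - η x) ^ 3 := pow_le_pow_left₀ hd2.le (hm x) 3
      linarith
  have hI1 : Integrable (fun x => (1 - η x) * (εv x) ^ 2) := by
    apply hεv2.bdd_mul (c := 1) (continuous_const.sub hcont).aestronglyMeasurable
    refine Filter.Eventually.of_forall (fun x => ?_)
    show ‖1 - η x‖ ≤ 1
    rw [Real.norm_eq_abs, abs_of_nonneg (hmpos x).le]
    exact hm1 x
  have hI2 : Integrable (fun x => (c / (1 - η x)) * (εη x * εv x)) := by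
    apply hεηv.bdd_mul
    · exact (continuous_const.div (continuous_const.sub hcont) hmne).aestronglyMeasurable
    · refine Filter.Eventually.of_forall (fun x => (?_ : _ ≤ |c| / (c ^ 2 / 2)))
      rw [Real.norm_eq_abs, abs_div, abs_of_nonneg (hmpos x).le]
      exact div_le_div₀ (abs_nonneg c) le_rfl hd2 (hm x)
  -- rewrite the three integrals
  have e2 : (∫ x : ℝ, (2 - deriv (deriv η) x / (1 - η x) ^ 2
        - (deriv η x) ^ 2 / (1 - η x) ^ 3) * (εη x) ^ 2)
      = (∫ x : ℝ, ((2 - c ^ 2 - 6 * η x + 3 * (η x) ^ 2) / (1 - η x) ^ 2) * (εη x) ^ 2)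
        + 4 * (∫ x : ℝ, c ^ 2 / (4 * (1 - η x) ^ 3) * (εη x) ^ 2) := by
    rw [← integral_const_mul, ← integral_add hIB (hIF.const_mul 4)]
    exact integral_congr_ae (Filter.Eventually.of_forall hpt2)
  have e3L : (∫ x : ℝ, ((1 - η x) * (εv x) ^ 2 + (c - 2 * v x) * εη x * εv x))
      = (∫ x : ℝ, ((1 - η x) * (εv x) ^ 2 + (c / (1 - η x)) * (εη x * εv x))) :=
    integral_congr_ae (Filter.Eventually.of_forall hpt3L)
  have e3R : (∫ x : ℝ, (1 - η x) * (εv x + c * εη x / (2 * (1 - η x) ^ 2)) ^ 2)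
      = (∫ x : ℝ, ((1 - η x) * (εv x) ^ 2 + (c / (1 - η x)) * (εη x * εv x)))
        + (∫ x : ℝ, c ^ 2 / (4 * (1 - η x) ^ 3) * (εη x) ^ 2) := by
    have hIC : Integrable (fun x => (1 - η x) * (εv x) ^ 2
        + (c / (1 - η x)) * (εη x * εv x)) := hI1.add hI2
    rw [← integral_add hIC hIF]
    exact integral_congr_ae (Filter.Eventually.of_forall hpt3R)
  rw [e2, e3L, e3R]
  ring
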